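/- Let Y be a finite pure l-dimensional weighted simplicial complex, l ≥ 2, all of whose links of dimension ≥ 1 (including the 1-skeleton of Y itself) have connected 1-skeletons. Suppose −1 ≤ κ₁ ≤ 0 ≤ κ₂ ≤ 1/l are such that for every τ ∈ Y(l−2) the spectrum of the random walk operator A_τ on the link graph is contained in [κ₁, κ₂] ∪ {1}. Then the spectrum of the random walk operator on the 1-skeleton of Y is contained in [κ₁/(1−(l−1)κ₁), κ₂/(1−(l−1)κ₂)] ∪ {1}. -/

import Mathlib

noncomputable section

open scoped BigOperators Classical

/-- Simplices of `K` of cardinality `j` containing `σ`. -/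
def cofacesCard {V : Type} (K : Set (Finset V)) (σ : Finset V) (j : ℕ) :
    Set (Finset V) :=
  {η : Finset V | η ∈ K ∧ σ ⊆ η ∧ η.card = j}

/-- The standard weight of a pure `n`-dimensional weighted simplicial complex:
`m(σ) = 1` on top-dimensional simplices and
`m(τ) = Σ_{σ ⊃ τ, dim σ = dim τ + 1} m(σ)` below. -/
structure IsStdWeight {V : Type} (K : Set (Finset V)) (n : ℕ) (m : Finset V → ℝ) :
    Prop where
  top_eq : ∀ σ ∈ K, σ.card = n + 1 → m σ = 1
  rec_eq : ∀ τ, ∀ hτ : τ ∈ K, ∀ k : ℕ, k < n → τ.card = k + 1 →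
    ∀ h : (cofacesCard K τ (k + 2)).Finite, m τ = ∑ η ∈ h.toFinset, m η

/-- Vertex set of (the 1-skeleton of) the link of the simplex `t` (for `t = ∅`,
this is the vertex set of the 1-skeleton of the complex itself). -/
def linkVerts {V : Type} [DecidableEq V] (K : Set (Finset V)) (t : Finset V) :
    Set V :=
  {v : V | v ∉ t ∧ insert v t ∈ K}

/-- Edge weight `m_t({u,v}) = m(t ∪ {u,v})` of the 1-skeleton of the link of `t`
(zero when `{u,v}` is not an edge of the link). -/
def linkW {V : Type} [DecidableEq V] (K : Set (Finset V)) (m : Finset V → ℝ)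
    (t : Finset V) (u v : V) : ℝ :=
  if u ≠ v ∧ u ∉ t ∧ v ∉ t ∧ insert u (insert v t) ∈ K then
    m (insert u (insert v t)) else 0

/-- Vertex weight `m_t(v)` in the link of `t`. -/
def linkDeg {V : Type} [DecidableEq V] [Fintype V] (K : Set (Finset V))
    (m : Finset V → ℝ) (t : Finset V) (v : V) : ℝ :=
  ∑ u, linkW K m t v u

/-- `μ` belongs to the spectrum of the (weighted) random walk operator on the
1-skeleton of the link of `t`: there is a function, not vanishing identically on the
link, which is an eigenfunction with eigenvalue `μ`. -/
def IsLinkEigenvalue {V : Type} [DecidableEq V] [Fintype V] (K : Set (Finset V))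
    (m : Finset V → ℝ) (t : Finset V) (μ : ℝ) : Prop :=
  ∃ f : V → ℝ, (∃ v ∈ linkVerts K t, f v ≠ 0) ∧
    ∀ v ∈ linkVerts K t,
      (∑ u, linkW K m t v u / linkDeg K m t v * f u) = μ * f v

/-- The 1-skeleton of the link of `t`, as a simple graph on the link's vertex set. -/
def linkGraph {V : Type} [DecidableEq V] (K : Set (Finset V)) (m : Finset V → ℝ)
    (t : Finset V) : SimpleGraph (linkVerts K t) :=
  SimpleGraph.induce (linkVerts K t) (SimpleGraph.fromRel fun u v => linkW K m t u v ≠ 0)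

lemma garland {S : Type} [Fintype S] [DecidableEq S] [Nonempty S]
    (W : S → S → ℝ) (hsym : ∀ u v, W u v = W v u) (hnn : ∀ u v, 0 ≤ W u v)
    (d : S → ℝ) (hd : ∀ v, d v = ∑ u, W v u) (hdpos : ∀ v, 0 < d v)
    (a b : ℝ)
    (heig : ∀ (μ : ℝ) (g : S → ℝ), (∃ v, g v ≠ 0) →
        (∀ v, (∑ u, W v u * g u) / d v = μ * g v) → μ = 1 ∨ (a ≤ μ ∧ μ ≤ b))
    (hharm : ∀ g : S → ℝ, (∀ v, (∑ u, W v u * g u) / d v = g v) → ∀ u v, g u = g v)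
    (f : S → ℝ) :
    a * ((∑ v, d v * f v ^ 2) - (∑ v, d v * f v) ^ 2 / (∑ v, d v)) ≤
      (∑ v, ∑ u, W v u * f v * f u) - (∑ v, d v * f v) ^ 2 / (∑ v, d v) ∧
    (∑ v, ∑ u, W v u * f v * f u) - (∑ v, d v * f v) ^ 2 / (∑ v, d v) ≤
      b * ((∑ v, d v * f v ^ 2) - (∑ v, d v * f v) ^ 2 / (∑ v, d v)) := by
  have hs : ∀ v, (0:ℝ) < Real.sqrt (d v) := fun v => Real.sqrt_pos.2 (hdpos v)
  have hss : ∀ v, Real.sqrt (d v) * Real.sqrt (d v) = d v :=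
    fun v => Real.mul_self_sqrt (hdpos v).le
  set B : Matrix S S ℝ := fun v u => W v u / (Real.sqrt (d v) * Real.sqrt (d u)) with hBdef
  have hB : B.IsHermitian := by
    ext v u
    rw [Matrix.conjTranspose_apply]
    simp only [star_trivial, hBdef]
    rw [hsym, mul_comm]
  have hBsymm : ∀ p q, B p q = B q p := by
    intro p q
    rw [hBdef]
    simp only []
    rw [hsym, mul_comm]
  have hip : ∀ x y : EuclideanSpace ℝ S, (inner ℝ x y : ℝ) = ∑ v, x v * y v := by
    intro x y
    simp [PiLp.inner_apply, RCLike.inner_apply, starRingEnd_apply, mul_comm]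
  set e := hB.eigenvectorBasis with he
  set μ := hB.eigenvalues with hμ
  have heB : ∀ i, B.mulVec (e i) = fun v => μ i * e i v := by
    intro i
    have h1 := hB.mulVec_eigenvectorBasis i
    funext v
    have := congrFun h1 v
    exact this
  set h : EuclideanSpace ℝ S := WithLp.toLp 2 (fun v => Real.sqrt (d v) * f v) with hh
  set c : S → ℝ := fun i => ∑ v, h v * e i v with hc
  have hcinner : ∀ i, (inner ℝ h (e i) : ℝ) = c i := fun i => hip _ _
  have hcinner' : ∀ i, (inner ℝ (e i) h : ℝ) = c i := by
    intro i; rw [real_inner_comm]; exact hcinner i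
  have hN : ∑ i, c i ^ 2 = ∑ v, d v * f v ^ 2 := by
    have hpar := OrthonormalBasis.sum_inner_mul_inner e h h
    rw [hip h h] at hpar
    calc ∑ i, c i ^ 2 = ∑ i, (inner ℝ h (e i) : ℝ) * inner ℝ (e i) h := by
          refine Finset.sum_congr rfl fun i _ => ?_
          rw [hcinner i, hcinner' i]; ring
      _ = ∑ v, h v * h v := hpar
      _ = ∑ v, d v * f v ^ 2 := by
          refine Finset.sum_congr rfl fun v _ => ?_
          have : h v * h v = (Real.sqrt (d v) * Real.sqrt (d v)) * f v ^ 2 := by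
            rw [hh]; ring
          rw [this, hss v]
  have hBh : ∀ v, (B.mulVec h) v = (∑ u, W v u * f u) / Real.sqrt (d v) := by
    intro v
    simp only [Matrix.mulVec, dotProduct, hBdef, hh]
    rw [Finset.sum_div]
    refine Finset.sum_congr rfl fun u _ => ?_
    field_simp [(hs v).ne', (hs u).ne']
  have hQ : ∑ i, μ i * c i ^ 2 = ∑ v, ∑ u, W v u * f v * f u := by
    set Bh : EuclideanSpace ℝ S := WithLp.toLp 2 (fun v => (∑ u, W v u * f u) / Real.sqrt (d v)) with hBh2
    have hBhEq : B.mulVec h = Bh := funext hBh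
    have hpar := OrthonormalBasis.sum_inner_mul_inner e Bh h
    have hL : ∑ i, ((inner ℝ Bh (e i) : ℝ) * inner ℝ (e i) h) = ∑ i, μ i * c i ^ 2 := by
      refine Finset.sum_congr rfl fun i _ => ?_
      have h1 : (inner ℝ Bh (e i) : ℝ) = μ i * c i := by
        rw [hip]
        calc ∑ v, Bh v * e i v = ∑ v, (B.mulVec h) v * e i v := by
              refine Finset.sum_congr rfl fun v _ => ?_
              rw [← congrFun hBhEq v]
          _ = ∑ v, h v * (B.mulVec (e i)) v := by
              simp only [Matrix.mulVec, dotProduct, Finset.sum_mul, Finset.mul_sum]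
              rw [Finset.sum_comm]
              refine Finset.sum_congr rfl fun v _ => Finset.sum_congr rfl fun u _ => ?_
              rw [hBsymm u v]
              ring
          _ = μ i * c i := by
              rw [heB i, hc]
              simp only []
              rw [Finset.mul_sum]
              exact Finset.sum_congr rfl fun v _ => by ring
      rw [h1, hcinner' i]
      ring
    have hR : (inner ℝ Bh h : ℝ) = ∑ v, ∑ u, W v u * f v * f u := by
      rw [hip]
      refine Finset.sum_congr rfl fun v _ => ?_
      have hBhv : Bh v = (∑ u, W v u * f u) / Real.sqrt (d v) := rfl
      rw [hBhv, hh]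
      simp only []
      have hstep : (∑ u, W v u * f u) / Real.sqrt (d v) * (Real.sqrt (d v) * f v)
          = (∑ u, W v u * f u) * f v := by
        field_simp
        rw [div_eq_iff (hs v).ne']
        ring
      rw [hstep, Finset.sum_mul]
      exact Finset.sum_congr rfl fun u _ => by ring
    rw [← hL, hpar, hR]
  -- swap lemma
  have hswap : ∀ x y : S → ℝ, ∑ v, (B.mulVec x) v * y v = ∑ v, x v * (B.mulVec y) v := by
    intro x y
    simp only [Matrix.mulVec, dotProduct, Finset.sum_mul, Finset.mul_sum]
    rw [Finset.sum_comm]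
    refine Finset.sum_congr rfl fun v _ => Finset.sum_congr rfl fun u _ => ?_
    rw [hBsymm u v]
    ring
  -- eigenvector translation
  have htrans : ∀ (lam : ℝ) (x : S → ℝ), (∀ v, (B.mulVec x) v = lam * x v) →
      ∀ v, (∑ u, W v u * (x u / Real.sqrt (d u))) / d v = lam * (x v / Real.sqrt (d v)) := by
    intro lam x hx v
    have h1 : ∑ u, B v u * x u = lam * x v := hx v
    have h2 : ∀ u, W v u * (x u / Real.sqrt (d u)) = Real.sqrt (d v) * (B v u * x u) := by
      intro u
      rw [hBdef]
      simp only []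
      field_simp
      rw [mul_div_mul_right _ _ (hs v).ne']
    have h3 : (∑ u, W v u * (x u / Real.sqrt (d u))) = Real.sqrt (d v) * (lam * x v) := by
      rw [Finset.sum_congr rfl fun u _ => h2 u, ← Finset.mul_sum, h1]
    rw [h3]
    rw [div_eq_iff (hdpos v).ne', mul_comm lam (x v / Real.sqrt (d v)),
      div_mul_eq_mul_div, div_mul_eq_mul_div, eq_div_iff (hs v).ne']
    linear_combination (lam * x v) * (hss v)
  have heB' : ∀ i v, (B.mulVec (e i)) v = μ i * e i v := by
    intro i v
    rw [heB i]
  -- each eigenvalue obeys the dichotomy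
  have hbound : ∀ i, μ i = 1 ∨ (a ≤ μ i ∧ μ i ≤ b) := by
    intro i
    refine heig (μ i) (fun v => e i v / Real.sqrt (d v)) ?_ (htrans (μ i) (e i) (heB' i))
    by_contra hz
    push_neg at hz
    have hz' : ∀ v, e i v = 0 := by
      intro v
      have := hz v
      rcases div_eq_zero_iff.1 this with h | h
      · exact h
      · exact absurd h (hs v).ne'
    have hne := e.orthonormal.ne_zero i
    apply hne
    ext v
    exact hz' v
  -- 1-eigenvectors are multiples of √d
  have hconst : ∀ x : S → ℝ, (∀ v, (B.mulVec x) v = 1 * x v) →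
      ∃ k : ℝ, ∀ v, x v = k * Real.sqrt (d v) := by
    intro x hx
    have hg := htrans 1 x hx
    have hcc : ∀ u v, x u / Real.sqrt (d u) = x v / Real.sqrt (d v) := by
      refine hharm (fun v => x v / Real.sqrt (d v)) fun v => ?_
      have := hg v
      rwa [one_mul] at this
    obtain v0 : S := Classical.arbitrary S
    refine ⟨x v0 / Real.sqrt (d v0), fun v => ?_⟩
    have h4 := hcc v v0
    rw [div_eq_div_iff (hs v).ne' (hs v0).ne'] at h4
    rw [div_mul_eq_mul_div, eq_div_iff (hs v0).ne']
    linarith [h4]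
  -- the all-ones direction
  set u0 : EuclideanSpace ℝ S := WithLp.toLp 2 (fun v => Real.sqrt (d v)) with hu0
  have hBu0 : ∀ v, (B.mulVec u0) v = 1 * u0 v := by
    intro v
    simp only [Matrix.mulVec, dotProduct, hBdef, hu0, one_mul]
    have hterm : ∀ u : S, W v u / (Real.sqrt (d v) * Real.sqrt (d u)) * Real.sqrt (d u)
        = W v u / Real.sqrt (d v) := by
      intro u
      field_simp
      rw [mul_comm (Real.sqrt (d v)) (Real.sqrt (d u)), mul_comm (W v u) (Real.sqrt (d u)),
        mul_div_mul_left _ _ (hs u).ne']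
    rw [Finset.sum_congr rfl fun u _ => hterm u, ← Finset.sum_div, ← hd v, Real.div_sqrt]
  have hSd : (0:ℝ) < ∑ v, d v :=
    Finset.sum_pos (fun v _ => hdpos v) Finset.univ_nonempty
  have hu0i : ∀ i, (∑ v, u0 v * e i v) ≠ 0 → μ i = 1 := by
    intro i hne
    have h5 : ∑ v, (B.mulVec u0) v * e i v = ∑ v, u0 v * (B.mulVec (e i)) v := hswap _ _
    have h6 : ∑ v, (B.mulVec u0) v * e i v = ∑ v, u0 v * e i v := by
      refine Finset.sum_congr rfl fun v _ => ?_
      rw [hBu0 v, one_mul]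
    have h7 : ∑ v, u0 v * (B.mulVec (e i)) v = μ i * ∑ v, u0 v * e i v := by
      rw [Finset.mul_sum]
      refine Finset.sum_congr rfl fun v _ => ?_
      rw [heB' i v]
      ring
    have h8 : (∑ v, u0 v * e i v) = μ i * ∑ v, u0 v * e i v := by
      conv_lhs => rw [← h6]
      rw [h5, h7]
    have h9 : (μ i - 1) * (∑ v, u0 v * e i v) = 0 := by
      rw [sub_mul, one_mul, ← h8, sub_self]
    rcases mul_eq_zero.1 h9 with h10 | h10
    · linarith [h10]
    · exact absurd h10 hne
  have hex : ∃ i, (∑ v, u0 v * e i v) ≠ 0 := by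
    by_contra hz
    push_neg at hz
    have hpar0 := OrthonormalBasis.sum_inner_mul_inner e u0 u0
    rw [hip u0 u0] at hpar0
    have hz2 : ∑ i, ((inner ℝ u0 (e i) : ℝ) * inner ℝ (e i) u0) = 0 := by
      refine Finset.sum_eq_zero fun i _ => ?_
      have : (inner ℝ u0 (e i) : ℝ) = 0 := by rw [hip]; exact hz i
      rw [this, zero_mul]
    rw [hz2] at hpar0
    have : (0:ℝ) < ∑ v, u0 v * u0 v := by
      refine Finset.sum_pos (fun v _ => ?_) Finset.univ_nonempty
      exact mul_pos (hs v) (hs v)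
    linarith [hpar0, this]
  obtain ⟨i0, hi0ne⟩ := hex
  have hi0 : μ i0 = 1 := hu0i i0 hi0ne
  have hconst_i0 : ∃ k : ℝ, ∀ v, e i0 v = k * Real.sqrt (d v) := by
    refine hconst (e i0) fun v => ?_
    rw [heB' i0 v, hi0]
  obtain ⟨k0, hk0⟩ := hconst_i0
  have hk0sq : k0 ^ 2 * (∑ v, d v) = 1 := by
    have hone : (inner ℝ (e i0) (e i0) : ℝ) = 1 := by
      rw [real_inner_self_eq_norm_sq, e.orthonormal.1 i0, one_pow]
    rw [hip] at hone
    rw [← hone, Finset.mul_sum]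
    refine Finset.sum_congr rfl fun v _ => ?_
    rw [hk0 v]
    linear_combination (-(k0 ^ 2)) * hss v
  have hk0ne : k0 ≠ 0 := by
    intro hk
    rw [hk] at hk0sq
    simp at hk0sq
  have hci0 : c i0 ^ 2 = (∑ v, d v * f v) ^ 2 / (∑ v, d v) := by
    have hc1 : c i0 = k0 * ∑ v, d v * f v := by
      rw [hc]
      simp only []
      rw [Finset.mul_sum]
      refine Finset.sum_congr rfl fun v _ => ?_
      rw [hk0 v, hh]
      simp only []
      linear_combination k0 * f v * hss v
    rw [hc1, mul_pow, eq_div_iff hSd.ne']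
    calc k0 ^ 2 * (∑ v, d v * f v) ^ 2 * (∑ v, d v)
        = (k0 ^ 2 * (∑ v, d v)) * (∑ v, d v * f v) ^ 2 := by ring
      _ = (∑ v, d v * f v) ^ 2 := by rw [hk0sq, one_mul]
  have huniq : ∀ i, i ≠ i0 → a ≤ μ i ∧ μ i ≤ b := by
    intro i hne
    rcases hbound i with h1i | hok
    · exfalso
      have hconst_i : ∃ k : ℝ, ∀ v, e i v = k * Real.sqrt (d v) := by
        refine hconst (e i) fun v => ?_
        rw [heB' i v, h1i]
      obtain ⟨k, hk⟩ := hconst_i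
      have hkne : k ≠ 0 := by
        intro hkz
        have : e i = 0 := by
          ext v
          rw [hk v, hkz, zero_mul]
          rfl
        exact e.orthonormal.ne_zero i this
      have horth : (inner ℝ (e i) (e i0) : ℝ) = 0 := e.orthonormal.2 hne
      rw [hip] at horth
      have : ∑ v, e i v * e i0 v = k * k0 * ∑ v, d v := by
        rw [Finset.mul_sum]
        refine Finset.sum_congr rfl fun v _ => ?_
        rw [hk v, hk0 v]
        linear_combination k * k0 * hss v
      rw [this] at horth
      have := mul_ne_zero (mul_ne_zero hkne hk0ne) hSd.ne'
      exact this horth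
    · exact hok
  -- final assembly
  set P := (∑ v, d v * f v) ^ 2 / (∑ v, d v) with hP
  have hrestN : ∑ i ∈ Finset.univ.erase i0, c i ^ 2 = (∑ v, d v * f v ^ 2) - P := by
    have h11 : c i0 ^ 2 + ∑ i ∈ Finset.univ.erase i0, c i ^ 2 = ∑ v, d v * f v ^ 2 := by
      rw [← hN]
      exact Finset.add_sum_erase Finset.univ (fun i => c i ^ 2) (Finset.mem_univ i0)
    rw [← hci0]
    linarith [h11]
  have hrestQ : ∑ i ∈ Finset.univ.erase i0, μ i * c i ^ 2
      = (∑ v, ∑ u, W v u * f v * f u) - P := by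
    have h11 : μ i0 * c i0 ^ 2 + ∑ i ∈ Finset.univ.erase i0, μ i * c i ^ 2
        = ∑ v, ∑ u, W v u * f v * f u := by
      rw [← hQ]
      exact Finset.add_sum_erase Finset.univ (fun i => μ i * c i ^ 2) (Finset.mem_univ i0)
    have h10 : μ i0 * c i0 ^ 2 = P := by rw [hi0, hci0, one_mul]
    linarith [h11]
  constructor
  · rw [← hrestQ, ← hrestN, Finset.mul_sum]
    refine Finset.sum_le_sum fun i hi => ?_
    have hi' := huniq i (Finset.ne_of_mem_erase hi)
    have := sq_nonneg (c i)
    nlinarith [hi'.1]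
  · rw [← hrestQ, ← hrestN, Finset.mul_sum]
    refine Finset.sum_le_sum fun i hi => ?_
    have hi' := huniq i (Finset.ne_of_mem_erase hi)
    have := sq_nonneg (c i)
    nlinarith [hi'.2]
section Comb
variable {V : Type} [DecidableEq V] [Fintype V] (K : Set (Finset V)) (l : ℕ)
  (m : Finset V → ℝ)

lemma card_le_of_mem (hpure : ∀ σ ∈ K, ∃ η ∈ K, σ ⊆ η ∧ η.card = l + 1)
    {σ : Finset V} (hσ : σ ∈ K) : σ.card ≤ l + 1 := by
  obtain ⟨η, hη, hsub, hcard⟩ := hpure σ hσ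
  calc σ.card ≤ η.card := Finset.card_le_card hsub
    _ = l + 1 := hcard

lemma m_pos_aux (hdown : ∀ σ ∈ K, ∀ τ : Finset V, τ ⊆ σ → τ.Nonempty → τ ∈ K)
    (hpure : ∀ σ ∈ K, ∃ η ∈ K, σ ⊆ η ∧ η.card = l + 1)
    (hm : IsStdWeight K l m) :
    ∀ j : ℕ, ∀ σ ∈ K, σ.Nonempty → l + 1 ≤ σ.card + j → 0 < m σ := by
  intro j
  induction j with
  | zero =>
    intro σ hσ hne hcard
    have h1 : σ.card = l + 1 :=
      le_antisymm (card_le_of_mem K l hpure hσ) (by omega)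
    rw [hm.top_eq σ hσ h1]
    norm_num
  | succ j ih =>
    intro σ hσ hne hcard
    by_cases hc : l + 1 ≤ σ.card + j
    · exact ih σ hσ hne hc
    · have h1 : 1 ≤ σ.card := Finset.card_pos.2 hne
      have hk : σ.card = (σ.card - 1) + 1 := by omega
      have hklt : σ.card - 1 < l := by omega
      rw [hm.rec_eq σ hσ (σ.card - 1) hklt hk (Set.toFinite _)]
      have hcc : σ.card - 1 + 2 = σ.card + 1 := by omega
      refine Finset.sum_pos (fun η hη => ?_) ?_
      · rw [Set.Finite.mem_toFinset] at hη
        obtain ⟨hηK, hsub, hηcard⟩ := hη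
        refine ih η hηK (Finset.card_pos.1 (by omega)) (by omega)
      · obtain ⟨η₀, hη₀, hsub₀, hcard₀⟩ := hpure σ hσ
        obtain ⟨η, hsub1, hsub2, hηcard⟩ :=
          Finset.exists_subsuperset_card_eq hsub₀ (by omega) (by omega : σ.card - 1 + 2 ≤ η₀.card)
        refine ⟨η, ?_⟩
        rw [Set.Finite.mem_toFinset]
        exact ⟨hdown η₀ hη₀ η hsub2 (Finset.card_pos.1 (by omega)), hsub1, hηcard⟩

lemma m_pos (hdown : ∀ σ ∈ K, ∀ τ : Finset V, τ ⊆ σ → τ.Nonempty → τ ∈ K)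
    (hpure : ∀ σ ∈ K, ∃ η ∈ K, σ ⊆ η ∧ η.card = l + 1)
    (hm : IsStdWeight K l m) {σ : Finset V} (hσ : σ ∈ K) (hne : σ.Nonempty) : 0 < m σ :=
  m_pos_aux K l m hdown hpure hm (l + 1) σ hσ hne (by omega)

lemma linkW_symm (t : Finset V) (u v : V) : linkW K m t u v = linkW K m t v u := by
  unfold linkW
  by_cases h : u ≠ v ∧ u ∉ t ∧ v ∉ t ∧ insert u (insert v t) ∈ K
  · rw [if_pos h, if_pos ⟨h.1.symm, h.2.2.1, h.2.1, by
      rw [Finset.insert_comm]; exact h.2.2.2⟩, Finset.insert_comm]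
  · rw [if_neg h, if_neg fun hc => h ⟨hc.1.symm, hc.2.2.1, hc.2.1, by
      rw [Finset.insert_comm]; exact hc.2.2.2⟩]

lemma linkW_nonneg (hdown : ∀ σ ∈ K, ∀ τ : Finset V, τ ⊆ σ → τ.Nonempty → τ ∈ K)
    (hpure : ∀ σ ∈ K, ∃ η ∈ K, σ ⊆ η ∧ η.card = l + 1)
    (hm : IsStdWeight K l m) (t : Finset V) (u v : V) : 0 ≤ linkW K m t u v := by
  unfold linkW
  split_ifs with h
  · exact (m_pos K l m hdown hpure hm h.2.2.2 (Finset.insert_nonempty _ _)).le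
  · exact le_refl _

lemma linkW_ne_zero_left (hdown : ∀ σ ∈ K, ∀ τ : Finset V, τ ⊆ σ → τ.Nonempty → τ ∈ K)
    {t : Finset V} {u v : V} (h : linkW K m t u v ≠ 0) : u ∈ linkVerts K t := by
  unfold linkW at h
  split_ifs at h with hc
  · exact ⟨hc.2.1, hdown _ hc.2.2.2 _ (Finset.insert_subset_insert _ (Finset.subset_insert _ _))
      (Finset.insert_nonempty _ _)⟩
  · exact absurd rfl h

lemma linkW_ne_zero_right (hdown : ∀ σ ∈ K, ∀ τ : Finset V, τ ⊆ σ → τ.Nonempty → τ ∈ K)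
    {t : Finset V} {u v : V} (h : linkW K m t u v ≠ 0) : v ∈ linkVerts K t := by
  rw [linkW_symm] at h
  exact linkW_ne_zero_left K m hdown h

lemma linkDeg_eq_zero (hdown : ∀ σ ∈ K, ∀ τ : Finset V, τ ⊆ σ → τ.Nonempty → τ ∈ K)
    {t : Finset V} {u : V} (h : u ∉ linkVerts K t) : linkDeg K m t u = 0 := by
  unfold linkDeg
  refine Finset.sum_eq_zero fun x _ => ?_
  by_contra hx
  exact h (linkW_ne_zero_left K m hdown hx)

/-- Key recursion: summing `m (insert x σ)` over admissible `x` recovers `m σ`. -/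
lemma sum_insert_eq (hm : IsStdWeight K l m) {σ : Finset V} (hσ : σ ∈ K)
    (hne : σ.Nonempty) (hcard : σ.card ≤ l) :
    ∑ x ∈ Finset.univ.filter (fun x => x ∉ σ ∧ insert x σ ∈ K), m (insert x σ) = m σ := by
  have h1 : 1 ≤ σ.card := Finset.card_pos.2 hne
  have hk : σ.card = (σ.card - 1) + 1 := by omega
  rw [hm.rec_eq σ hσ (σ.card - 1) (by omega) hk (Set.toFinite _)]
  refine Finset.sum_bij (fun x _ => insert x σ) ?_ ?_ ?_ ?_
  · intro x hx
    rw [Finset.mem_filter] at hx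
    rw [Set.Finite.mem_toFinset]
    refine ⟨hx.2.2, Finset.subset_insert _ _, ?_⟩
    rw [Finset.card_insert_of_notMem hx.2.1]
    omega
  · intro x hx y hy hxy
    rw [Finset.mem_filter] at hx hy
    have hxy' : insert x σ = insert y σ := hxy
    have : x ∈ insert y σ := by rw [← hxy']; exact Finset.mem_insert_self _ _
    rcases Finset.mem_insert.1 this with h | h
    · exact h
    · exact absurd h hx.2.1
  · intro η hη
    rw [Set.Finite.mem_toFinset] at hη
    obtain ⟨hηK, hsub, hηcard⟩ := hη
    have : (η \ σ).Nonempty := by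
      rw [← Finset.card_pos, Finset.card_sdiff_of_subset hsub]
      omega
    obtain ⟨x, hx⟩ := this
    rw [Finset.mem_sdiff] at hx
    have hins : insert x σ = η := by
      apply Finset.eq_of_subset_of_card_le
      · exact Finset.insert_subset hx.1 hsub
      · rw [Finset.card_insert_of_notMem hx.2]
        omega
    refine ⟨x, ?_, hins⟩
    rw [Finset.mem_filter]
    refine ⟨Finset.mem_univ _, hx.2, ?_⟩
    rw [hins]
    exact hηK
  · intro x hx
    rfl

end Comb
section Comb2
variable {V : Type} [DecidableEq V] [Fintype V] (K : Set (Finset V)) (l : ℕ)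
  (m : Finset V → ℝ)

lemma linkDeg_eq (hm : IsStdWeight K l m) {t : Finset V} {u : V}
    (hu : u ∈ linkVerts K t) (hc : t.card + 1 ≤ l) :
    linkDeg K m t u = m (insert u t) := by
  obtain ⟨hut, huK⟩ := hu
  have hcard : (insert u t).card ≤ l := by
    rw [Finset.card_insert_of_notMem hut]; exact hc
  rw [← sum_insert_eq K l m hm huK (Finset.insert_nonempty _ _) hcard, Finset.sum_filter]
  unfold linkDeg linkW
  refine Finset.sum_congr rfl fun x _ => ?_
  rw [Finset.insert_comm]
  refine if_congr ?_ rfl rfl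
  constructor
  · rintro ⟨h1, h2, h3, h4⟩
    refine ⟨fun hx => ?_, h4⟩
    rcases Finset.mem_insert.1 hx with h | h
    · exact h1 h.symm
    · exact h3 h
  · rintro ⟨h1, h2⟩
    refine ⟨fun he => h1 ?_, hut, fun hx => h1 (Finset.mem_insert_of_mem hx), h2⟩
    rw [← he]
    exact Finset.mem_insert_self _ _

lemma linkDeg_insert (hdown : ∀ σ ∈ K, ∀ τ : Finset V, τ ⊆ σ → τ.Nonempty → τ ∈ K)
    (hm : IsStdWeight K l m) {t : Finset V} {v : V}
    (hv : v ∈ linkVerts K t) (hc : t.card + 2 ≤ l) (u : V) :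
    linkDeg K m (insert v t) u = linkW K m t v u := by
  obtain ⟨hvt, hvK⟩ := hv
  by_cases hcond : v ≠ u ∧ v ∉ t ∧ u ∉ t ∧ insert v (insert u t) ∈ K
  · have hval : linkW K m t v u = m (insert v (insert u t)) := by
      unfold linkW; rw [if_pos hcond]
    have hσeq : insert v (insert u t) = insert u (insert v t) := Finset.insert_comm _ _ _
    set σ := insert u (insert v t) with hσ
    have hσK : σ ∈ K := by rw [← hσeq]; exact hcond.2.2.2
    have hσcard : σ.card ≤ l := by
      rw [hσ, Finset.card_insert_of_notMem (by
        simp only [Finset.mem_insert, not_or]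
        exact ⟨fun h => hcond.1 h.symm, hcond.2.2.1⟩),
        Finset.card_insert_of_notMem hvt]
      omega
    rw [hval, hσeq, ← sum_insert_eq K l m hm hσK (Finset.insert_nonempty _ _) hσcard,
      Finset.sum_filter]
    unfold linkDeg linkW
    refine Finset.sum_congr rfl fun x _ => ?_
    rw [Finset.insert_comm u x]
    refine if_congr ?_ rfl rfl
    constructor
    · rintro ⟨h1, h2, h3, h4⟩
      refine ⟨fun hx => ?_, h4⟩
      rw [hσ] at hx
      rcases Finset.mem_insert.1 hx with h | h
      · exact h1 h.symm
      · exact h3 h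
    · rintro ⟨h1, h2⟩
      have hx1 : x ∉ σ := h1
      rw [hσ] at hx1
      simp only [Finset.mem_insert, not_or] at hx1
      refine ⟨fun he => hx1.1 he.symm, ?_, ?_, h2⟩
      · simp only [Finset.mem_insert, not_or]
        exact ⟨fun h => hcond.1 h.symm, hcond.2.2.1⟩
      · simp only [Finset.mem_insert, not_or]
        exact hx1.2
  · have hval : linkW K m t v u = 0 := by
      unfold linkW; rw [if_neg hcond]
    rw [hval]
    refine Finset.sum_eq_zero fun x _ => ?_
    by_contra hne
    unfold linkW at hne
    split_ifs at hne with h2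
    · obtain ⟨h1', h2', h3', h4'⟩ := h2
      simp only [Finset.mem_insert, not_or] at h2' h3'
      apply hcond
      refine ⟨fun h => h2'.1 h.symm, hvt, h2'.2, ?_⟩
      refine hdown _ h4' _ ?_ (Finset.insert_nonempty _ _)
      intro y hy
      rcases Finset.mem_insert.1 hy with h | h
      · subst h
        exact Finset.mem_insert_of_mem (Finset.mem_insert_of_mem (Finset.mem_insert_self _ _))
      · rcases Finset.mem_insert.1 h with h' | h'
        · subst h'
          exact Finset.mem_insert_self _ _
        · exact Finset.mem_insert_of_mem (Finset.mem_insert_of_mem (Finset.mem_insert_of_mem h'))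
    · exact hne rfl

lemma sum_linkW_link (hdown : ∀ σ ∈ K, ∀ τ : Finset V, τ ⊆ σ → τ.Nonempty → τ ∈ K)
    (hm : IsStdWeight K l m) {t : Finset V} (hc : t.card + 2 ≤ l) (u x : V) :
    ∑ v ∈ Finset.univ.filter (fun v => v ∈ linkVerts K t), linkW K m (insert v t) u x
      = linkW K m t u x := by
  by_cases hcond : u ≠ x ∧ u ∉ t ∧ x ∉ t ∧ insert u (insert x t) ∈ K
  · set σ := insert u (insert x t) with hσ
    have hσK : σ ∈ K := hcond.2.2.2
    have hσcard : σ.card ≤ l := by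
      rw [hσ, Finset.card_insert_of_notMem (by
        simp only [Finset.mem_insert, not_or]
        exact ⟨hcond.1, hcond.2.1⟩),
        Finset.card_insert_of_notMem hcond.2.2.1]
      omega
    rw [show linkW K m t u x = m σ from by unfold linkW; rw [if_pos hcond],
      ← sum_insert_eq K l m hm hσK (Finset.insert_nonempty _ _) hσcard,
      Finset.sum_filter, Finset.sum_filter]
    refine Finset.sum_congr rfl fun v _ => ?_
    by_cases hvL : v ∈ linkVerts K t
    · rw [if_pos hvL]
      unfold linkW
      rw [show insert u (insert x (insert v t)) = insert v σ from by
        rw [hσ, Finset.insert_comm x v, Finset.insert_comm u v]]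
      refine if_congr ?_ rfl rfl
      constructor
      · rintro ⟨h1, h2, h3, h4⟩
        simp only [Finset.mem_insert, not_or] at h2 h3
        refine ⟨?_, h4⟩
        rw [hσ]
        simp only [Finset.mem_insert, not_or]
        exact ⟨fun h => h2.1 h.symm, fun h => h3.1 h.symm, hvL.1⟩
      · rintro ⟨h1, h2⟩
        rw [hσ] at h1
        simp only [Finset.mem_insert, not_or] at h1
        refine ⟨hcond.1, ?_, ?_, h2⟩
        · simp only [Finset.mem_insert, not_or]
          exact ⟨fun h => h1.1 h.symm, hcond.2.1⟩
        · simp only [Finset.mem_insert, not_or]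
          exact ⟨fun h => h1.2.1 h.symm, hcond.2.2.1⟩
    · rw [if_neg hvL, if_neg]
      rintro ⟨h1, h2⟩
      apply hvL
      have hvt : v ∉ t := by
        intro h
        exact h1 (by rw [hσ]; exact Finset.mem_insert_of_mem (Finset.mem_insert_of_mem h))
      refine ⟨hvt, hdown _ h2 _ (Finset.insert_subset_insert _ (by
        rw [hσ]
        exact (Finset.subset_insert _ _).trans (Finset.subset_insert _ _))) (Finset.insert_nonempty _ _)⟩
  · rw [show linkW K m t u x = 0 from by unfold linkW; rw [if_neg hcond]]
    refine Finset.sum_eq_zero fun v hv => ?_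
    rw [Finset.mem_filter] at hv
    by_contra hne
    unfold linkW at hne
    split_ifs at hne with h2
    · obtain ⟨h1', h2', h3', h4'⟩ := h2
      simp only [Finset.mem_insert, not_or] at h2' h3'
      apply hcond
      refine ⟨h1', h2'.2, h3'.2, ?_⟩
      refine hdown _ h4' _ ?_ (Finset.insert_nonempty _ _)
      refine Finset.insert_subset (Finset.mem_insert_self _ _) ?_
      refine Finset.insert_subset (Finset.mem_insert_of_mem (Finset.mem_insert_self _ _)) ?_
      intro y hy
      exact Finset.mem_insert_of_mem (Finset.mem_insert_of_mem (Finset.mem_insert_of_mem hy))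
    · exact hne rfl

end Comb2
section Comb3
variable {V : Type} [DecidableEq V] [Fintype V] (K : Set (Finset V)) (l : ℕ)
  (m : Finset V → ℝ)

/-- Restrict a linkW-weighted sum over all of `V` to the link's vertex subtype. -/
lemma sum_linkW_subtype (hdown : ∀ σ ∈ K, ∀ τ : Finset V, τ ⊆ σ → τ.Nonempty → τ ∈ K)
    {s : Finset V} (p : V) (F : V → ℝ) :
    ∑ x : V, linkW K m s p x * F x
      = ∑ u : {x // x ∈ linkVerts K s}, linkW K m s p ↑u * F ↑u := by
  rw [← Finset.sum_filter_of_ne (p := fun x => x ∈ linkVerts K s)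
    (fun x _ h => linkW_ne_zero_right K m hdown (left_ne_zero_of_mul h))]
  exact Finset.sum_subtype _ (fun x => by simp) _

lemma sum_linkDeg_subtype (hdown : ∀ σ ∈ K, ∀ τ : Finset V, τ ⊆ σ → τ.Nonempty → τ ∈ K)
    {s : Finset V} (F : V → ℝ) :
    ∑ x : V, linkDeg K m s x * F x
      = ∑ u : {x // x ∈ linkVerts K s}, linkDeg K m s ↑u * F ↑u := by
  rw [← Finset.sum_filter_of_ne (p := fun x => x ∈ linkVerts K s)
    (fun x _ h => by
      by_contra hx
      exact h (by rw [linkDeg_eq_zero K m hdown hx, zero_mul]))]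
  exact Finset.sum_subtype _ (fun x => by simp) _

lemma adj_linkW {s : Finset V} {p q : ↥(linkVerts K s)}
    (h : (linkGraph K m s).Adj p q) : linkW K m s ↑p ↑q ≠ 0 := by
  have h' : (SimpleGraph.fromRel fun u v => linkW K m s u v ≠ 0).Adj ↑p ↑q := h
  rw [SimpleGraph.fromRel_adj] at h'
  rcases h'.2 with h2 | h2
  · exact h2
  · rw [linkW_symm]
    exact h2

/-- Harmonic functions on a connected link are constant. -/
lemma harmonic_const (hdown : ∀ σ ∈ K, ∀ τ : Finset V, τ ⊆ σ → τ.Nonempty → τ ∈ K)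
    (hpure : ∀ σ ∈ K, ∃ η ∈ K, σ ⊆ η ∧ η.card = l + 1)
    (hm : IsStdWeight K l m) {s : Finset V} (hsK : s ∈ K) (hsc : s.card + 1 ≤ l)
    (hconn : (linkGraph K m s).Connected)
    (g : {x // x ∈ linkVerts K s} → ℝ)
    (hg : ∀ v : {x // x ∈ linkVerts K s},
      (∑ u : {x // x ∈ linkVerts K s}, linkW K m s ↑v ↑u * g u) / linkDeg K m s ↑v = g v) :
    ∀ u v, g u = g v := by
  haveI : Nonempty {x // x ∈ linkVerts K s} := hconn.nonempty
  have hdpos : ∀ v : {x // x ∈ linkVerts K s}, 0 < linkDeg K m s ↑v := by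
    intro v
    rw [linkDeg_eq K l m hm v.2 hsc]
    exact m_pos K l m hdown hpure hm v.2.2 (Finset.insert_nonempty _ _)
  have hWnn := linkW_nonneg K l m hdown hpure hm s
  obtain ⟨u₀, _, hmax⟩ := Finset.exists_max_image Finset.univ g Finset.univ_nonempty
  set M := g u₀ with hM
  -- propagation along edges
  have hstep : ∀ p : {x // x ∈ linkVerts K s}, g p = M →
      ∀ q : {x // x ∈ linkVerts K s}, linkW K m s ↑p ↑q ≠ 0 → g q = M := by
    intro p hp q hWq
    have hsum : ∑ u : {x // x ∈ linkVerts K s}, linkW K m s ↑p ↑u * g u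
        = M * linkDeg K m s ↑p := by
      have := hg p
      rw [div_eq_iff (hdpos p).ne'] at this
      rw [this, hp]
    have hdeg : linkDeg K m s ↑p = ∑ u : {x // x ∈ linkVerts K s}, linkW K m s ↑p ↑u := by
      have := sum_linkW_subtype K m hdown (s := s) (↑p) (fun _ => (1:ℝ))
      simp only [mul_one] at this
      rw [← this]
      rfl
    have hzero : ∑ u : {x // x ∈ linkVerts K s}, linkW K m s ↑p ↑u * (M - g u) = 0 := by
      simp only [mul_sub]
      rw [Finset.sum_sub_distrib, hsum, hdeg, ← Finset.sum_mul]
      ring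
    have hterm := (Finset.sum_eq_zero_iff_of_nonneg
      (fun u _ => mul_nonneg (hWnn _ _) (by linarith [hmax u (Finset.mem_univ u)]))).1
      hzero q (Finset.mem_univ q)
    rcases mul_eq_zero.1 hterm with h | h
    · exact absurd h hWq
    · linarith [h]
  -- propagation along walks
  have hwalk : ∀ (p q : {x // x ∈ linkVerts K s}) (w : (linkGraph K m s).Walk p q),
      g p = M → g q = M := by
    intro p q w
    induction w with
    | nil => exact id
    | cons hadj w ih =>
      intro hp
      exact ih (hstep _ hp _ (adj_linkW K m hadj))
  have hall : ∀ v, g v = M := fun v =>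
    (hconn.preconnected u₀ v).elim fun w => hwalk _ _ w rfl
  intro u v
  rw [hall u, hall v]

end Comb3
section Step
variable {V : Type} [DecidableEq V] [Fintype V] (K : Set (Finset V)) (l : ℕ)
  (m : Finset V → ℝ)

lemma sum_restrict {s : Finset V} (G : V → ℝ)
    (hG : ∀ x, x ∉ linkVerts K s → G x = 0) :
    ∑ x : V, G x = ∑ u : {x // x ∈ linkVerts K s}, G ↑u := by
  rw [← Finset.sum_filter_of_ne (p := fun x => x ∈ linkVerts K s)
    (fun x _ h => by by_contra hx; exact h (hG x hx))]
  exact Finset.sum_subtype _ (fun x => by simp) _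

lemma sum_extend {t : Finset V} (G : V → ℝ)
    (hG : ∀ x, x ∉ linkVerts K t → G x = 0) :
    ∑ v ∈ Finset.univ.filter (fun v => v ∈ linkVerts K t), G v = ∑ v : V, G v :=
  Finset.sum_filter_of_ne (fun x _ h => by by_contra hx; exact h (hG x hx))

lemma descent_step (hdown : ∀ σ ∈ K, ∀ τ : Finset V, τ ⊆ σ → τ.Nonempty → τ ∈ K)
    (hpure : ∀ σ ∈ K, ∃ η ∈ K, σ ⊆ η ∧ η.card = l + 1)
    (hm : IsStdWeight K l m)
    (hconn : ∀ t : Finset V, (t = ∅ ∨ t ∈ K) → t.card ≤ l - 1 →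
      (linkGraph K m t).Connected)
    {t : Finset V} (ht : t = ∅ ∨ t ∈ K) (hc : t.card + 2 ≤ l)
    {a b : ℝ} (ha : a ≤ 0) (hb0 : 0 ≤ b) (hb1 : b < 1)
    (hstep : ∀ v ∈ linkVerts K t, ∀ μ : ℝ,
      IsLinkEigenvalue K m (insert v t) μ → μ = 1 ∨ (a ≤ μ ∧ μ ≤ b))
    {μ : ℝ} (hμ : IsLinkEigenvalue K m t μ) :
    μ = 1 ∨ (a / (1 - a) ≤ μ ∧ μ ≤ b / (1 - b)) := by
  by_cases hμ1 : μ = 1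
  · exact Or.inl hμ1
  right
  obtain ⟨f, ⟨v₀, hv₀L, hv₀⟩, heqf⟩ := hμ
  have hWnn : ∀ (s : Finset V) (u v : V), 0 ≤ linkW K m s u v :=
    fun s => linkW_nonneg K l m hdown hpure hm s
  have hDnn : ∀ (s : Finset V) (v : V), 0 ≤ linkDeg K m s v := by
    intro s v
    exact Finset.sum_nonneg fun u _ => hWnn s v u
  have hDpos : ∀ v ∈ linkVerts K t, 0 < linkDeg K m t v := by
    intro v hv
    rw [linkDeg_eq K l m hm hv (by omega)]
    exact m_pos K l m hdown hpure hm hv.2 (Finset.insert_nonempty _ _)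
  -- eigen equation in product form
  have heq' : ∀ v ∈ linkVerts K t, ∑ u, linkW K m t v u * f u = μ * f v * linkDeg K m t v := by
    intro v hv
    have h0 := heqf v hv
    have h1 : ∑ u, linkW K m t v u / linkDeg K m t v * f u
        = (∑ u, linkW K m t v u * f u) / linkDeg K m t v := by
      rw [Finset.sum_div]
      exact Finset.sum_congr rfl fun u _ => by rw [div_mul_eq_mul_div]
    rw [h1, div_eq_iff (hDpos v hv).ne'] at h0
    rw [h0]
  set N := ∑ u : V, linkDeg K m t u * f u ^ 2 with hN
  have hNpos : 0 < N := by
    refine Finset.sum_pos' (fun u _ => mul_nonneg (hDnn t u) (sq_nonneg _)) ?_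
    exact ⟨v₀, Finset.mem_univ _,
      mul_pos (hDpos v₀ hv₀L) (by positivity)⟩
  set L := Finset.univ.filter (fun v => v ∈ linkVerts K t) with hL
  -- |μ| ≤ 1 via maximum principle
  have habs : |μ| ≤ 1 := by
    obtain ⟨v₁, hv₁L, hmax⟩ := Finset.exists_max_image L (fun v => |f v|)
      ⟨v₀, by rw [hL, Finset.mem_filter]; exact ⟨Finset.mem_univ _, hv₀L⟩⟩
    have hv₁ : v₁ ∈ linkVerts K t := (Finset.mem_filter.1 hv₁L).2
    have hf₁pos : 0 < |f v₁| :=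
      lt_of_lt_of_le (abs_pos.2 hv₀)
        (hmax v₀ (by rw [hL, Finset.mem_filter]; exact ⟨Finset.mem_univ _, hv₀L⟩))
    have s1 : |∑ u, linkW K m t v₁ u * f u| ≤ ∑ u, linkW K m t v₁ u * |f v₁| := by
      refine le_trans (Finset.abs_sum_le_sum_abs _ _) (Finset.sum_le_sum fun u _ => ?_)
      rw [abs_mul, abs_of_nonneg (hWnn t v₁ u)]
      by_cases hW0 : linkW K m t v₁ u = 0
      · rw [hW0, zero_mul, zero_mul]
      · have hu : u ∈ linkVerts K t := linkW_ne_zero_right K m hdown hW0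
        exact mul_le_mul_of_nonneg_left
          (hmax u (by rw [hL, Finset.mem_filter]; exact ⟨Finset.mem_univ _, hu⟩)) (hWnn t v₁ u)
    have s2 : ∑ u, linkW K m t v₁ u * |f v₁| = linkDeg K m t v₁ * |f v₁| := by
      rw [← Finset.sum_mul]
      rfl
    have s3 : |∑ u, linkW K m t v₁ u * f u| = |μ| * |f v₁| * linkDeg K m t v₁ := by
      rw [heq' v₁ hv₁, abs_mul, abs_mul, abs_of_nonneg (hDnn t v₁)]
    rw [s3, s2] at s1
    nlinarith [s1, mul_pos (hDpos v₁ hv₁) hf₁pos]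
  have hμlt : μ < 1 := lt_of_le_of_ne (abs_le.1 habs).2 hμ1
  have hμge : (-1:ℝ) ≤ μ := (abs_le.1 habs).1
  -- per-vertex Garland inequality, in V-sums
  have hvert : ∀ v ∈ linkVerts K t,
      a * ((∑ x, linkW K m t v x * f x ^ 2) - μ ^ 2 * f v ^ 2 * linkDeg K m t v) ≤
        (∑ p, ∑ q, linkW K m (insert v t) p q * f p * f q)
          - μ ^ 2 * f v ^ 2 * linkDeg K m t v ∧
      (∑ p, ∑ q, linkW K m (insert v t) p q * f p * f q)
          - μ ^ 2 * f v ^ 2 * linkDeg K m t v ≤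
        b * ((∑ x, linkW K m t v x * f x ^ 2) - μ ^ 2 * f v ^ 2 * linkDeg K m t v) := by
    intro v hv
    set s := insert v t with hs
    have hsK : s ∈ K := hv.2
    have hscard : s.card = t.card + 1 := Finset.card_insert_of_notMem hv.1
    have hscard1 : s.card + 1 ≤ l := by omega
    haveI hSne : Nonempty {x // x ∈ linkVerts K s} :=
      (hconn s (Or.inr hsK) (by omega)).nonempty
    have hdeg_sub : ∀ u : {x // x ∈ linkVerts K s},
        linkDeg K m s ↑u = ∑ x : {x // x ∈ linkVerts K s}, linkW K m s ↑u ↑x := by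
      intro u
      have := sum_linkW_subtype K m hdown (s := s) (↑u) (fun _ => (1:ℝ))
      simp only [mul_one] at this
      rw [← this]
      rfl
    have hdpos' : ∀ u : {x // x ∈ linkVerts K s}, 0 < linkDeg K m s ↑u := by
      intro u
      rw [linkDeg_eq K l m hm u.2 hscard1]
      exact m_pos K l m hdown hpure hm u.2.2 (Finset.insert_nonempty _ _)
    have hgar := garland (S := {x // x ∈ linkVerts K s})
      (fun u x => linkW K m s ↑u ↑x)
      (fun u x => linkW_symm K m s ↑u ↑x)
      (fun u x => hWnn s ↑u ↑x)
      (fun u => linkDeg K m s ↑u)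
      hdeg_sub hdpos' a b
      ?_ ?_ (fun u => f ↑u)
    rotate_left
    · -- heig
      intro ν g hgne hgeq
      refine hstep v hv ν ?_
      set gt : V → ℝ := fun x => if hx : x ∈ linkVerts K s then g ⟨x, hx⟩ else 0 with hgt
      obtain ⟨u, hu⟩ := hgne
      refine ⟨gt, ⟨↑u, u.2, by rw [hgt]; simpa [u.2] using hu⟩, ?_⟩
      intro x hx
      have hgtx : gt x = g ⟨x, hx⟩ := by rw [hgt]; exact dif_pos hx
      have h1 : ∑ y, linkW K m s x y / linkDeg K m s x * gt y
          = (∑ y, linkW K m s x y * gt y) / linkDeg K m s x := by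
        rw [Finset.sum_div]
        exact Finset.sum_congr rfl fun y _ => by rw [div_mul_eq_mul_div]
      rw [h1, sum_linkW_subtype K m hdown (s := s) x gt]
      have h2 : ∀ y : {x // x ∈ linkVerts K s}, gt ↑y = g y := by
        intro y
        rw [hgt]
        simp [y.2]
      rw [Finset.sum_congr rfl fun y _ => by rw [h2 y], hgtx]
      exact hgeq ⟨x, hx⟩
    · -- hharm
      intro g hgeq
      exact harmonic_const K l m hdown hpure hm hsK hscard1
        (hconn s (Or.inr hsK) (by omega)) g hgeq
    -- convert subtype sums to V-sums
    have c1 : ∑ u : {x // x ∈ linkVerts K s}, linkDeg K m s ↑u * f ↑u ^ 2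
        = ∑ x : V, linkDeg K m s x * f x ^ 2 :=
      (sum_restrict K (fun x => linkDeg K m s x * f x ^ 2)
        (fun x hx => by simp [linkDeg_eq_zero K m hdown hx])).symm
    have c2 : ∑ u : {x // x ∈ linkVerts K s}, linkDeg K m s ↑u * f ↑u
        = ∑ x : V, linkDeg K m s x * f x :=
      (sum_restrict K (fun x => linkDeg K m s x * f x)
        (fun x hx => by simp [linkDeg_eq_zero K m hdown hx])).symm
    have c3 : ∑ u : {x // x ∈ linkVerts K s}, linkDeg K m s ↑u = ∑ x : V, linkDeg K m s x :=
      (sum_restrict K (fun x => linkDeg K m s x)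
        (fun x hx => by simp [linkDeg_eq_zero K m hdown hx])).symm
    have c4 : ∑ u : {x // x ∈ linkVerts K s}, ∑ x : {x // x ∈ linkVerts K s},
          linkW K m s ↑u ↑x * f ↑u * f ↑x
        = ∑ p : V, ∑ q : V, linkW K m s p q * f p * f q := by
      rw [sum_restrict K (fun p => ∑ q : V, linkW K m s p q * f p * f q)
        (fun p hp => by
          refine Finset.sum_eq_zero fun q _ => ?_
          have h0 : linkW K m s p q = 0 := by
            by_contra h
            exact hp (linkW_ne_zero_left K m hdown h)
          simp [h0])]
      refine Finset.sum_congr rfl fun u _ => ?_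
      exact (sum_restrict K (fun q => linkW K m s ↑u q * f ↑u * f q)
        (fun q hq => by
          have h0 : linkW K m s ↑u q = 0 := by
            by_contra h
            exact hq (linkW_ne_zero_right K m hdown h)
          simp [h0])).symm
    rw [c1, c2, c3, c4] at hgar
    -- identify with base-link quantities
    have d0 : ∀ x, linkDeg K m s x = linkW K m t v x :=
      linkDeg_insert K l m hdown hm hv hc
    have e1 : ∑ x : V, linkDeg K m s x * f x ^ 2 = ∑ x, linkW K m t v x * f x ^ 2 :=
      Finset.sum_congr rfl fun x _ => by rw [d0 x]
    have e2 : ∑ x : V, linkDeg K m s x * f x = μ * f v * linkDeg K m t v := by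
      rw [Finset.sum_congr rfl fun x _ => by rw [d0 x]]
      exact heq' v hv
    have e3 : ∑ x : V, linkDeg K m s x = linkDeg K m t v := by
      rw [Finset.sum_congr rfl fun x _ => by rw [d0 x]]
      rfl
    rw [e1, e2, e3] at hgar
    have e4 : (μ * f v * linkDeg K m t v) ^ 2 / linkDeg K m t v
        = μ ^ 2 * f v ^ 2 * linkDeg K m t v := by
      rw [div_eq_iff (hDpos v hv).ne']
      ring
    rw [e4] at hgar
    exact hgar
  -- sum the per-vertex inequalities over the link
  have hsumA : a * (N - μ ^ 2 * N) ≤ μ * N - μ ^ 2 * N ∧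
      μ * N - μ ^ 2 * N ≤ b * (N - μ ^ 2 * N) := by
    have T1 : ∑ v ∈ L, (∑ x, linkW K m t v x * f x ^ 2) = N := by
      rw [Finset.sum_comm]
      rw [hN]
      refine Finset.sum_congr rfl fun x _ => ?_
      have : ∑ v ∈ L, linkW K m t v x * f x ^ 2
          = (∑ v ∈ L, linkW K m t v x) * f x ^ 2 := by rw [Finset.sum_mul]
      rw [this]
      have hLW : ∑ v ∈ L, linkW K m t v x = linkDeg K m t x := by
        rw [hL, sum_extend K (fun v => linkW K m t v x)
          (fun y hy => by
            by_contra h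
            exact hy (linkW_ne_zero_left K m hdown h))]
        rw [Finset.sum_congr rfl fun y _ => linkW_symm K m t y x]
        rfl
      rw [hLW]
    have T2 : ∑ v ∈ L, μ ^ 2 * f v ^ 2 * linkDeg K m t v = μ ^ 2 * N := by
      rw [hN, Finset.mul_sum]
      rw [hL, sum_extend K (fun v => μ ^ 2 * f v ^ 2 * linkDeg K m t v)
        (fun y hy => by simp [linkDeg_eq_zero K m hdown hy])]
      exact Finset.sum_congr rfl fun v _ => by ring
    have T3 : ∑ v ∈ L, (∑ p, ∑ q, linkW K m (insert v t) p q * f p * f q)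
        = ∑ p, ∑ q, linkW K m t p q * f p * f q := by
      rw [Finset.sum_comm]
      refine Finset.sum_congr rfl fun p _ => ?_
      rw [Finset.sum_comm]
      refine Finset.sum_congr rfl fun q _ => ?_
      have : ∑ v ∈ L, linkW K m (insert v t) p q * f p * f q
          = (∑ v ∈ L, linkW K m (insert v t) p q) * (f p * f q) := by
        rw [Finset.sum_mul]
        exact Finset.sum_congr rfl fun v _ => by ring
      rw [this, hL, sum_linkW_link K l m hdown hm hc p q]
      ring
    have T4 : ∑ p : V, ∑ q, linkW K m t p q * f p * f q = μ * N := by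
      rw [hN, Finset.mul_sum]
      refine Finset.sum_congr rfl fun p _ => ?_
      have h5 : ∑ q, linkW K m t p q * f p * f q = f p * ∑ q, linkW K m t p q * f q := by
        rw [Finset.mul_sum]
        exact Finset.sum_congr rfl fun q _ => by ring
      by_cases hp : p ∈ linkVerts K t
      · rw [h5, heq' p hp]
        ring
      · have : ∀ q, linkW K m t p q = 0 := by
          intro q
          by_contra h
          exact hp (linkW_ne_zero_left K m hdown h)
        rw [h5, Finset.sum_congr rfl fun q _ => by rw [this q, zero_mul],
          Finset.sum_const_zero, linkDeg_eq_zero K m hdown hp]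
        ring
    constructor
    · have := Finset.sum_le_sum (f := fun v =>
        a * ((∑ x, linkW K m t v x * f x ^ 2) - μ ^ 2 * f v ^ 2 * linkDeg K m t v))
        (g := fun v => (∑ p, ∑ q, linkW K m (insert v t) p q * f p * f q)
          - μ ^ 2 * f v ^ 2 * linkDeg K m t v)
        (s := L)
        (fun v hvL => (hvert v (Finset.mem_filter.1 hvL).2).1)
      rw [Finset.sum_sub_distrib, T3, T4, T2] at this
      calc a * (N - μ ^ 2 * N)
          = ∑ v ∈ L, a * ((∑ x, linkW K m t v x * f x ^ 2)
              - μ ^ 2 * f v ^ 2 * linkDeg K m t v) := by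
            rw [← Finset.mul_sum, Finset.sum_sub_distrib, T1, T2]
        _ ≤ μ * N - μ ^ 2 * N := this
    · have := Finset.sum_le_sum (f := fun v =>
        (∑ p, ∑ q, linkW K m (insert v t) p q * f p * f q)
          - μ ^ 2 * f v ^ 2 * linkDeg K m t v)
        (g := fun v => b * ((∑ x, linkW K m t v x * f x ^ 2)
          - μ ^ 2 * f v ^ 2 * linkDeg K m t v))
        (s := L)
        (fun v hvL => (hvert v (Finset.mem_filter.1 hvL).2).2)
      rw [Finset.sum_sub_distrib, T3, T4, T2] at this
      calc μ * N - μ ^ 2 * N ≤ ∑ v ∈ L, b * ((∑ x, linkW K m t v x * f x ^ 2)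
            - μ ^ 2 * f v ^ 2 * linkDeg K m t v) := this
        _ = b * (N - μ ^ 2 * N) := by
            rw [← Finset.mul_sum, Finset.sum_sub_distrib, T1, T2]
  -- divide by N and conclude
  obtain ⟨hA, hB⟩ := hsumA
  have hA' : a * (1 - μ ^ 2) ≤ μ - μ ^ 2 := by
    have h3 : (a * (1 - μ ^ 2)) * N ≤ (μ - μ ^ 2) * N := by ring_nf; ring_nf at hA ⊢; linarith
    exact le_of_mul_le_mul_right h3 hNpos
  have hB' : μ - μ ^ 2 ≤ b * (1 - μ ^ 2) := by
    have h3 : (μ - μ ^ 2) * N ≤ (b * (1 - μ ^ 2)) * N := by ring_nf; ring_nf at hB; linarith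
    exact le_of_mul_le_mul_right h3 hNpos
  constructor
  · rw [div_le_iff₀ (by linarith : (0:ℝ) < 1 - a)]
    have hc' : 0 ≤ μ - a * (1 + μ) := by nlinarith [hA', hμlt, hμge]
    nlinarith [hc']
  · rw [le_div_iff₀ (by linarith : (0:ℝ) < 1 - b)]
    have hc' : 0 ≤ b * (1 + μ) - μ := by nlinarith [hB', hμlt, hμge]
    nlinarith [hc']

end Step

/-- spectral descent.  Let `Y` be a finite pure `l`-dimensional
weighted simplicial complex, `l ≥ 2`, all of whose links of dimension `≥ 1`
(including `Y` itself) have connected 1-skeletons.  If `−1 ≤ κ₁ ≤ 0 ≤ κ₂ ≤ 1/l` and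
for every `τ ∈ Y(l−2)` the spectrum of the random walk on the link of `τ` lies in
`[κ₁,κ₂] ∪ {1}`, then the spectrum of the random walk on the 1-skeleton of `Y` lies
in `[κ₁/(1−(l−1)κ₁), κ₂/(1−(l−1)κ₂)] ∪ {1}`. -/
theorem stmt18 {V : Type} [DecidableEq V] [Fintype V] (K : Set (Finset V)) (l : ℕ)
    (hl : 2 ≤ l)
    (hdown : ∀ σ ∈ K, ∀ τ : Finset V, τ ⊆ σ → τ.Nonempty → τ ∈ K)
    (hpure : ∀ σ ∈ K, ∃ η ∈ K, σ ⊆ η ∧ η.card = l + 1)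
    (m : Finset V → ℝ) (hm : IsStdWeight K l m)
    (hconn : ∀ t : Finset V, (t = ∅ ∨ t ∈ K) → t.card ≤ l - 1 →
      (linkGraph K m t).Connected)
    (κ₁ κ₂ : ℝ) (h₁ : -1 ≤ κ₁) (h₁0 : κ₁ ≤ 0) (h₂0 : 0 ≤ κ₂) (h₂ : κ₂ ≤ 1 / l)
    (hlinks : ∀ τ ∈ K, τ.card = l - 1 → ∀ μ : ℝ,
      IsLinkEigenvalue K m τ μ → μ ∈ Set.Icc κ₁ κ₂ ∪ {1}) :
    ∀ μ : ℝ, IsLinkEigenvalue K m ∅ μ →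
      μ ∈ Set.Icc (κ₁ / (1 - (l - 1 : ℝ) * κ₁)) (κ₂ / (1 - (l - 1 : ℝ) * κ₂)) ∪ {1} := by
  have hl1 : (1:ℕ) ≤ l := by omega
  have hlR : (2:ℝ) ≤ (l:ℝ) := by exact_mod_cast hl
  have hlpos : (0:ℝ) < (l:ℝ) := by linarith
  have main : ∀ j : ℕ, j + 1 ≤ l → ∀ t : Finset V, (t = ∅ ∨ t ∈ K) → t.card + j + 1 = l →
      ∀ ν : ℝ, IsLinkEigenvalue K m t ν →
      ν = 1 ∨ (κ₁ / (1 - (j:ℝ) * κ₁) ≤ ν ∧ ν ≤ κ₂ / (1 - (j:ℝ) * κ₂)) := by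
    intro j
    induction j with
    | zero =>
      intro hj t ht hcard ν hν
      have htK : t ∈ K := by
        rcases ht with h | h
        · exfalso
          subst h
          simp only [Finset.card_empty] at hcard
          omega
        · exact h
      have h2 := hlinks t htK (by omega) ν hν
      rcases h2 with h | h
      · right
        rw [Set.mem_Icc] at h
        constructor <;> simp only [Nat.cast_zero, zero_mul, sub_zero, div_one]
        · exact h.1
        · exact h.2
      · left
        exact h
    | succ j ih =>
      intro hj t ht hcard ν hν
      have hjl : (j:ℝ) ≤ (l:ℝ) - 2 := by
        have h0 : j + 2 ≤ l := by omega
        have := (Nat.cast_le (α := ℝ)).2 h0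
        push_cast at this
        linarith
      have hjnn : (0:ℝ) ≤ (j:ℝ) := Nat.cast_nonneg j
      have hden1 : (0:ℝ) < 1 - (j:ℝ) * κ₁ := by nlinarith
      have hden1' : (0:ℝ) < 1 - ((j:ℝ) + 1) * κ₁ := by nlinarith
      have hinv : (0:ℝ) < 1 / (l:ℝ) := by positivity
      have hinv1 : (l:ℝ) * (1 / (l:ℝ)) = 1 := by field_simp
      have hj1 : (j:ℝ) + 1 ≤ (l:ℝ) - 1 := by linarith
      have hp : ((j:ℝ) + 1) * κ₂ ≤ ((l:ℝ) - 1) * (1 / (l:ℝ)) :=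
        mul_le_mul hj1 h₂ h₂0 (by linarith)
      have hp' : ((j:ℝ) + 1) * κ₂ ≤ 1 - 1 / (l:ℝ) := by nlinarith
      have hden2' : (0:ℝ) < 1 - ((j:ℝ) + 1) * κ₂ := by nlinarith
      have hden2 : (0:ℝ) < 1 - (j:ℝ) * κ₂ := by nlinarith
      have hres := descent_step K l m hdown hpure hm hconn ht (by omega)
        (a := κ₁ / (1 - (j:ℝ) * κ₁)) (b := κ₂ / (1 - (j:ℝ) * κ₂))
        (by rw [div_nonpos_iff]; right; exact ⟨h₁0, hden1.le⟩)
        (div_nonneg h₂0 hden2.le)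
        ((div_lt_one hden2).2 (by nlinarith))
        (fun v hv ν' hν' => ih (by omega) (insert v t) (Or.inr hv.2)
          (by rw [Finset.card_insert_of_notMem hv.1]; omega) ν' hν')
        hν
      rcases hres with h | h
      · exact Or.inl h
      · right
        have e1 : κ₁ / (1 - (j:ℝ) * κ₁) / (1 - κ₁ / (1 - (j:ℝ) * κ₁))
            = κ₁ / (1 - ((j:ℝ) + 1) * κ₁) := by
          rw [div_div]
          congr 1
          field_simp
          ring
        have e2 : κ₂ / (1 - (j:ℝ) * κ₂) / (1 - κ₂ / (1 - (j:ℝ) * κ₂))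
            = κ₂ / (1 - ((j:ℝ) + 1) * κ₂) := by
          rw [div_div]
          congr 1
          field_simp
          ring
        push_cast
        rw [← e1, ← e2]
        exact h
  intro μ hμ
  have h := main (l - 1) (by omega) ∅ (Or.inl rfl)
    (by simp only [Finset.card_empty]; omega) μ hμ
  have hcast : ((l - 1 : ℕ) : ℝ) = (l : ℝ) - 1 := by
    push_cast [Nat.cast_sub hl1]
    ring
  rcases h with h | h
  · exact Or.inr (Set.mem_singleton_iff.2 h)
  · left
    rw [Set.mem_Icc]
    rw [hcast] at h
    exact h
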